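/- Let (X,d) be a metric space, β a Geraghty function, and suppose a sequence (aₙ) of nonnegative reals satisfies a_{n+1} ≤ β(aₙ)·aₙ for all n. Then aₙ → 0. -/

import Mathlib

open Filter Topology

def IsGeraghty (β : ℝ → ℝ) : Prop :=
  (∀ t : ℝ, 0 ≤ t → 0 ≤ β t ∧ β t < 1) ∧
  (∀ t : ℕ → ℝ, (∀ n, 0 ≤ t n) →
    Filter.Tendsto (fun n => β (t n)) Filter.atTop (nhds 1) →
    Filter.Tendsto t Filter.atTop (nhds 0))

theorem geraghty_sequence_lemma (β : ℝ → ℝ) (hβ : IsGeraghty β) (a : ℕ → ℝ)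
    (ha : ∀ n, 0 ≤ a n) (h : ∀ n, a (n + 1) ≤ β (a n) * a n) :
    Tendsto a atTop (𝓝 0) := by
  obtain ⟨hβ1, hβ2⟩ := hβ
  have hmono : ∀ n, a (n + 1) ≤ a n := by
    intro n
    calc a (n + 1) ≤ β (a n) * a n := h n
    _ ≤ 1 * a n := by
        apply mul_le_mul_of_nonneg_right (le_of_lt (hβ1 _ (ha n)).2) (ha n)
    _ = a n := one_mul _
  have hanti : Antitone a := antitone_nat_of_succ_le hmono
  have hbdd : BddBelow (Set.range a) := ⟨0, by rintro x ⟨n, rfl⟩; exact ha n⟩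
  set L := ⨅ n, a n with hLdef
  have hL : Tendsto a atTop (𝓝 L) := tendsto_atTop_ciInf hanti hbdd
  have hL0 : 0 ≤ L := le_ciInf ha
  rcases eq_or_lt_of_le hL0 with hE | hpos
  · rwa [← hE] at hL
  · exfalso
    have haL : ∀ n, L ≤ a n := fun n => ciInf_le hbdd n
    have hne : ∀ n, a n ≠ 0 := fun n => ne_of_gt (lt_of_lt_of_le hpos (haL n))
    have hdiv : Tendsto (fun n => a (n + 1) / a n) atTop (𝓝 1) := by
      have h1 : Tendsto (fun n => a (n + 1)) atTop (𝓝 L) :=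
        hL.comp (tendsto_add_atTop_nat 1)
      have := h1.div hL (ne_of_gt hpos)
      rw [div_self (ne_of_gt hpos)] at this; exact this
    have hβlim : Tendsto (fun n => β (a n)) atTop (𝓝 1) := by
      apply tendsto_of_tendsto_of_tendsto_of_le_of_le hdiv tendsto_const_nhds
      · intro n
        exact (div_le_iff₀ (lt_of_lt_of_le hpos (haL n))).mpr (h n)
      · intro n
        exact le_of_lt (hβ1 _ (ha n)).2
    have h0 := hβ2 a ha hβlim
    have : L = 0 := tendsto_nhds_unique hL h0
    exact absurd this (ne_of_gt hpos)
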